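/- (Theorem 2, exact equal-elevation form.) Let J be a finite index set, let a_{H,j} ∈ ℂ^{M_H} for j ∈ J, and let a_V ∈ ℂ^{M_V} be a single common vector (the interfering users share the same elevation steering vector). Let H̃ be the |J|×(M_H·M_V) matrix whose rows are (a_{H,j} ⊗ a_V)^H, let H̃_H be the |J|×M_H matrix whose rows are a_{H,j}^H, and let H̃_V be the |J|×M_V matrix each of whose rows is a_V^H. Then the column space of the Gram matrix H̃^H·H̃ equals the ℂ-submodule of ℂ^{M_H·M_V} spanned by {x ⊗ y : x ∈ col(H̃_H^H·H̃_H), y ∈ col(H̃_V^H·H̃_V)}; that is, the column space of the multi-user interference Gram matrix is formed by the tensor product of the column spaces of the horizontal and vertical interference Gram matrices. -/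

import Mathlib

open Matrix

/-- Kronecker (tensor) product of vectors: `(u ⊗ v)[(i−1)·n + j] = u[i]·v[j]`,
indexed via `finProdFinEquiv : Fin m × Fin n ≃ Fin (m * n)`, `(i, j) ↦ j + n * i`. -/
def vecKron {m n : ℕ} (u : Fin m → ℂ) (v : Fin n → ℂ) : Fin (m * n) → ℂ :=
  fun k => u (finProdFinEquiv.symm k).1 * v (finProdFinEquiv.symm k).2

lemma vecKron_add_left {m n : ℕ} (u u' : Fin m → ℂ) (v : Fin n → ℂ) :
    vecKron (u + u') v = vecKron u v + vecKron u' v := by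
  funext k; simp [vecKron, add_mul]

lemma vecKron_add_right {m n : ℕ} (u : Fin m → ℂ) (v v' : Fin n → ℂ) :
    vecKron u (v + v') = vecKron u v + vecKron u v' := by
  funext k; simp [vecKron, mul_add]

lemma vecKron_smul_left {m n : ℕ} (c : ℂ) (u : Fin m → ℂ) (v : Fin n → ℂ) :
    vecKron (c • u) v = c • vecKron u v := by
  funext k; simp [vecKron, mul_assoc]

lemma vecKron_smul_right {m n : ℕ} (c : ℂ) (u : Fin m → ℂ) (v : Fin n → ℂ) :
    vecKron u (c • v) = c • vecKron u v := by
  funext k; simp [vecKron]; ring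

lemma vecKron_zero_left {m n : ℕ} (v : Fin n → ℂ) :
    vecKron (0 : Fin m → ℂ) v = 0 := by
  funext k; simp [vecKron]

lemma vecKron_zero_right {m n : ℕ} (u : Fin m → ℂ) :
    vecKron u (0 : Fin n → ℂ) = 0 := by
  funext k; simp [vecKron]

open ComplexOrder in
lemma gram_range {J : Type} [Fintype J] {N : ℕ} (A : Matrix J (Fin N) ℂ) :
    LinearMap.range (Aᴴ * A).mulVecLin = Submodule.span ℂ (Set.range Aᴴᵀ) := by
  classical
  have h1 : LinearMap.range (Aᴴ * A).mulVecLin ≤ LinearMap.range Aᴴ.mulVecLin := by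
    rw [Matrix.mulVecLin_mul]
    exact LinearMap.range_comp_le_range _ _
  have h2 : LinearMap.range (Aᴴ * A).mulVecLin = LinearMap.range Aᴴ.mulVecLin := by
    apply Submodule.eq_of_le_of_finrank_le h1
    have : (Aᴴ * A).rank = Aᴴ.rank := by
      rw [Matrix.rank_conjTranspose_mul_self, Matrix.rank_conjTranspose]
    simpa [Matrix.rank] using this.ge
  rw [h2, Matrix.range_mulVecLin]
  rfl

/-- Theorem 2 (exact equal-elevation form): when the interfering users share a common
vertical steering vector `a_V`, the column space of the Gram matrix `H̃^H·H̃` of the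
interference matrix (rows `(a_{H,j} ⊗ a_V)^H`) equals the span of the Kronecker products
of vectors from the column spaces of the horizontal and vertical Gram matrices. -/
theorem stmt_9 (MH MV : ℕ) (J : Type) [Fintype J]
    (aH : J → Fin MH → ℂ) (aV : Fin MV → ℂ) :
    LinearMap.range
        (((Matrix.of fun (j : J) (k : Fin (MH * MV)) => star (vecKron (aH j) aV k))ᴴ *
          (Matrix.of fun (j : J) (k : Fin (MH * MV)) =>
            star (vecKron (aH j) aV k))).mulVecLin) =
      Submodule.span ℂ
        {w : Fin (MH * MV) → ℂ |
          ∃ x ∈ LinearMap.range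
            (((Matrix.of fun (j : J) (k : Fin MH) => star (aH j k))ᴴ *
              (Matrix.of fun (j : J) (k : Fin MH) => star (aH j k))).mulVecLin),
          ∃ y ∈ LinearMap.range
            (((Matrix.of fun (_ : J) (k : Fin MV) => star (aV k))ᴴ *
              (Matrix.of fun (_ : J) (k : Fin MV) => star (aV k))).mulVecLin),
          w = vecKron x y} := by
  classical
  rw [gram_range, gram_range, gram_range]
  have eK : (Matrix.of fun (j : J) (k : Fin (MH * MV)) => star (vecKron (aH j) aV k))ᴴᵀ
      = fun j => vecKron (aH j) aV := by
    funext j k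
    simp [Matrix.conjTranspose_apply, Matrix.transpose_apply]
  have eH : (Matrix.of fun (j : J) (k : Fin MH) => star (aH j k))ᴴᵀ = aH := by
    funext j k
    simp [Matrix.conjTranspose_apply, Matrix.transpose_apply]
  have eV : (Matrix.of fun (_ : J) (k : Fin MV) => star (aV k))ᴴᵀ
      = fun _ : J => aV := by
    funext j k
    simp [Matrix.conjTranspose_apply, Matrix.transpose_apply]
  rw [eK, eH, eV]
  apply le_antisymm
  · apply Submodule.span_le.mpr
    rintro _ ⟨j, rfl⟩
    apply Submodule.subset_span
    exact ⟨aH j, Submodule.subset_span ⟨j, rfl⟩,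
      aV, Submodule.subset_span ⟨j, rfl⟩, rfl⟩
  · apply Submodule.span_le.mpr
    rintro _ ⟨x, hx, y, hy, rfl⟩
    induction hx using Submodule.span_induction with
    | mem x hxm =>
      obtain ⟨j, rfl⟩ := hxm
      induction hy using Submodule.span_induction with
      | mem y hym =>
        obtain ⟨i, rfl⟩ := hym
        exact Submodule.subset_span ⟨j, rfl⟩
      | zero => simp [vecKron_zero_right]
      | add y z _ _ hy hz =>
        rw [vecKron_add_right]; exact Submodule.add_mem _ hy hz
      | smul c y _ hy =>
        rw [vecKron_smul_right]; exact Submodule.smul_mem _ c hy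
    | zero => simp [vecKron_zero_left]
    | add x z _ _ hx1 hx2 =>
      rw [vecKron_add_left]; exact Submodule.add_mem _ hx1 hx2
    | smul c x _ hx1 =>
      rw [vecKron_smul_left]; exact Submodule.smul_mem _ c hx1
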